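/- (Lemma 4.2, second bullet.) Let P ≥ 0 and define g₂ : ℝ → ℝ by g₂(B) = 1 − (1/2 + (1/2)·erf(√(B/2) − √(P/2)))². Set χ₂ = max P (((√P + √(π/2) + √((√P + √(π/2))² − 2))/2)²), where the inner √ is Real.sqrt (equal to 0 when its argument is negative). Then g₂ is convex on [χ₂, ∞) (ConvexOn ℝ (Set.Ici χ₂) g₂). -/

import Mathlib

open MeasureTheory ProbabilityTheory Real Set

noncomputable def erf (x : ℝ) : ℝ :=
  (2 / Real.sqrt Real.pi) * ∫ t in (0:ℝ)..x, Real.exp (-t^2)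

lemma erf_hasDerivAt (x : ℝ) :
    HasDerivAt erf (2 / Real.sqrt Real.pi * Real.exp (-x^2)) x := by
  have hc : Continuous fun t : ℝ => Real.exp (-t^2) := by continuity
  have h := (hc.integral_hasStrictDerivAt (0:ℝ) x).hasDerivAt
  exact h.const_mul (2 / Real.sqrt Real.pi)

lemma erf_nonneg' {x : ℝ} (hx : 0 ≤ x) : 0 ≤ erf x := by
  unfold erf
  apply mul_nonneg (by positivity)
  apply intervalIntegral.integral_nonneg hx
  intro t _; positivity

lemma erf_continuous : Continuous erf :=
  continuous_iff_continuousAt.2 fun x => (erf_hasDerivAt x).continuousAt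

lemma sqrt_half_hasDerivAt {B : ℝ} (hB : 0 < B) :
    HasDerivAt (fun B : ℝ => Real.sqrt (B/2)) (1/(4 * Real.sqrt (B/2))) B := by
  have h1 := Real.hasDerivAt_sqrt (show B/2 ≠ 0 by positivity)
  have h2 : HasDerivAt (fun B : ℝ => B/2) (1/2) B := (hasDerivAt_id B).div_const 2
  have := h1.comp B h2
  refine this.congr_deriv ?_
  ring

noncomputable def Fd (c B : ℝ) : ℝ :=
  -(1/2 + (1/2) * erf (Real.sqrt (B/2) - c)) *
    (2 / Real.sqrt Real.pi *
      (Real.exp (-(Real.sqrt (B/2) - c)^2) * (4 * Real.sqrt (B/2))⁻¹))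

lemma g_hasDerivAt (c : ℝ) {B : ℝ} (hB : 0 < B) :
    HasDerivAt (fun B => 1 - (1/2 + (1/2) * erf (Real.sqrt (B/2) - c))^2) (Fd c B) B := by
  have hu : HasDerivAt (fun B : ℝ => Real.sqrt (B/2) - c) (1/(4 * Real.sqrt (B/2))) B :=
    (sqrt_half_hasDerivAt hB).sub_const c
  have he := (erf_hasDerivAt (Real.sqrt (B/2) - c)).comp B hu
  have h3 := (he.const_mul (1/2 : ℝ)).const_add (1/2 : ℝ)
  have h4 := h3.pow 2
  have h5 := h4.const_sub 1
  refine h5.congr_deriv ?_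
  simp only [Function.comp_apply]
  unfold Fd
  have hs : Real.sqrt (B/2) ≠ 0 := by positivity
  field_simp
  ring

set_option maxHeartbeats 1000000 in
lemma Fd_hasDerivAt (c : ℝ) {B : ℝ} (hB : 0 < B) :
    HasDerivAt (Fd c)
      ((2 / Real.sqrt Real.pi) * Real.exp (-(Real.sqrt (B/2) - c)^2) /
          (32 * Real.sqrt (B/2)^3) *
        ((1 + erf (Real.sqrt (B/2) - c)) * (2 * (Real.sqrt (B/2) - c) * Real.sqrt (B/2) + 1)
          - (2 / Real.sqrt Real.pi) * Real.exp (-(Real.sqrt (B/2) - c)^2) * Real.sqrt (B/2))) B := by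
  have hspos : 0 < Real.sqrt (B/2) := Real.sqrt_pos.2 (by positivity)
  have hsd := sqrt_half_hasDerivAt hB
  have hu : HasDerivAt (fun B : ℝ => Real.sqrt (B/2) - c) (1/(4 * Real.sqrt (B/2))) B :=
    hsd.sub_const c
  have he := (erf_hasDerivAt (Real.sqrt (B/2) - c)).comp B hu
  have hA := ((he.const_mul (1/2 : ℝ)).const_add (1/2 : ℝ)).neg
  have hE := ((hu.pow 2).neg).exp
  have h4s : (4 : ℝ) * Real.sqrt (B/2) ≠ 0 := by positivity
  have hinv := (hsd.const_mul (4:ℝ)).inv h4s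
  have hD := (hE.mul hinv).const_mul (2 / Real.sqrt Real.pi)
  have hF := hA.mul hD
  simp only [Function.comp] at hF
  refine hF.congr_deriv ?_
  simp only [Pi.mul_apply, Pi.neg_apply, Pi.pow_apply, Pi.inv_apply]
  have hpi : Real.sqrt Real.pi ≠ 0 := by positivity
  have hs : Real.sqrt (B/2) ≠ 0 := ne_of_gt hspos
  set s := Real.sqrt (B/2) with hsdef
  set E := Real.exp (-(s - c)^2) with hEdef
  set e := erf (s - c) with hedef
  field_simp
  ring

set_option maxHeartbeats 1000000 in
theorem stmt_16 (P : ℝ) (hP : 0 ≤ P)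
    (g₂ : ℝ → ℝ)
    (hg₂ : ∀ B, g₂ B = 1 - (1/2 + (1/2) * erf (Real.sqrt (B/2) - Real.sqrt (P/2)))^2)
    (χ₂ : ℝ)
    (hχ₂ : χ₂ = max P (((Real.sqrt P + Real.sqrt (Real.pi/2) +
      Real.sqrt ((Real.sqrt P + Real.sqrt (Real.pi/2))^2 - 2)) / 2)^2)) :
    ConvexOn ℝ (Set.Ici χ₂) g₂ := by
  have hgeq : g₂ = fun B => 1 - (1/2 + (1/2) * erf (Real.sqrt (B/2) - Real.sqrt (P/2)))^2 :=
    funext hg₂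
  set c := Real.sqrt (P/2) with hc
  set t := Real.sqrt P with ht
  set r := Real.sqrt (Real.pi/2) with hr
  set p := Real.sqrt Real.pi with hp
  set q := Real.sqrt 2 with hq
  have hq0 : 0 < q := Real.sqrt_pos.2 (by norm_num)
  have hp0 : 0 < p := Real.sqrt_pos.2 Real.pi_pos
  have hr0 : 0 < r := Real.sqrt_pos.2 (by positivity)
  have ht0 : 0 ≤ t := Real.sqrt_nonneg P
  have hq2 : q^2 = 2 := Real.sq_sqrt (by norm_num)
  have hp2 : p^2 = Real.pi := Real.sq_sqrt Real.pi_pos.le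
  have hrq : r * q = p := by
    rw [hr, hq, hp, ← Real.sqrt_mul (by positivity)]
    norm_num
  have hπ2 : (2:ℝ) ≤ Real.pi := by linarith [Real.pi_gt_three]
  -- positivity of χ₂
  have hρ : ((t + r + Real.sqrt ((t + r)^2 - 2)) / 2)^2 ≤ χ₂ := by
    rw [hχ₂]; exact le_max_right _ _
  have hPχ : P ≤ χ₂ := by rw [hχ₂]; exact le_max_left _ _
  have hρ0 : 0 ≤ (t + r + Real.sqrt ((t + r)^2 - 2)) / 2 := by
    have := Real.sqrt_nonneg ((t + r)^2 - 2); positivity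
  have hχpos : 0 < χ₂ := by
    refine lt_of_lt_of_le ?_ hρ
    have : 0 < (t + r + Real.sqrt ((t + r)^2 - 2)) / 2 := by
      have := Real.sqrt_nonneg ((t + r)^2 - 2); positivity
    positivity
  -- continuity
  have hcont : Continuous g₂ := by
    rw [hgeq]
    have h1 : Continuous fun B : ℝ => Real.sqrt (B/2) - c :=
      (Real.continuous_sqrt.comp (continuous_id.div_const 2)).sub continuous_const
    exact continuous_const.sub
      (((continuous_const.add (continuous_const.mul (erf_continuous.comp h1))).pow 2))
  have hIoi : interior (Set.Ici χ₂) = Set.Ioi χ₂ := interior_Ici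
  -- the derivative of g₂ equals Fd c on Ioi 0
  have hderiv : ∀ B ∈ Set.Ioi (0:ℝ), deriv g₂ B = Fd c B := by
    intro B hB
    rw [hgeq]
    exact (g_hasDerivAt c hB).deriv
  apply convexOn_of_deriv2_nonneg (convex_Ici χ₂) hcont.continuousOn
  · rw [hIoi]
    intro B hB
    have hB0 : 0 < B := lt_trans hχpos hB
    rw [hgeq]
    exact (g_hasDerivAt c hB0).differentiableAt.differentiableWithinAt
  · rw [hIoi]
    intro B hB
    have hB0 : 0 < B := lt_trans hχpos hB
    have hev : deriv g₂ =ᶠ[nhds B] Fd c := by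
      filter_upwards [Ioi_mem_nhds hB0] with y hy using hderiv y hy
    exact ((Fd_hasDerivAt c hB0).differentiableAt.congr_of_eventuallyEq
      hev).differentiableWithinAt
  · rw [hIoi]
    intro B hB
    have hB0 : 0 < B := lt_trans hχpos hB
    have hev : deriv g₂ =ᶠ[nhds B] Fd c := by
      filter_upwards [Ioi_mem_nhds hB0] with y hy using hderiv y hy
    have h2 : deriv^[2] g₂ B = deriv (Fd c) B := by
      rw [show deriv^[2] g₂ = deriv (deriv g₂) from rfl]
      exact hev.deriv_eq
    rw [h2, (Fd_hasDerivAt c hB0).deriv]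
    -- now the sign
    set x := Real.sqrt B with hx
    have hx0 : 0 < x := Real.sqrt_pos.2 hB0
    have hsx : Real.sqrt (B/2) = x / q := Real.sqrt_div hB0.le 2
    have hcx : c = t / q := Real.sqrt_div hP 2
    have hxt : t ≤ x := Real.sqrt_le_sqrt (le_trans hPχ hB.le)
    have hr2 : r^2 = Real.pi/2 := Real.sq_sqrt (by positivity)
    have hu0 : 0 ≤ Real.sqrt (B/2) - c := by
      rw [hsx, hcx, div_sub_div_same]
      exact div_nonneg (by linarith) hq0.le
    have he0 : 0 ≤ erf (Real.sqrt (B/2) - c) := erf_nonneg' hu0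
    have hE1 : Real.exp (-(Real.sqrt (B/2) - c)^2) ≤ 1 :=
      Real.exp_le_one_iff.2 (neg_nonpos.2 (sq_nonneg _))
    have hE0 : 0 < Real.exp (-(Real.sqrt (B/2) - c)^2) := Real.exp_pos _
    have hquad : 0 ≤ x^2 - (t + r)*x + 1/2 := by
      have h1 : Real.sqrt (((t + r + Real.sqrt ((t + r)^2 - 2))/2)^2) ≤ x :=
        Real.sqrt_le_sqrt (le_trans hρ hB.le)
      rw [Real.sqrt_sq hρ0] at h1
      clear_value x t r
      clear hderiv hev hgeq hg₂ h2
      rcases le_or_gt ((t + r)^2) 2 with hca | hca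
      · nlinarith [Real.sqrt_nonneg ((t + r)^2 - 2), sq_nonneg (2*x - (t + r))]
      · have hd : (Real.sqrt ((t + r)^2 - 2))^2 = (t + r)^2 - 2 :=
          Real.sq_sqrt (by linarith)
        have hd0 := Real.sqrt_nonneg ((t + r)^2 - 2)
        nlinarith [mul_nonneg (by linarith : (0:ℝ) ≤ 2*x - (t + r) - Real.sqrt ((t + r)^2 - 2))
          (by linarith : (0:ℝ) ≤ 2*x - (t + r) + Real.sqrt ((t + r)^2 - 2))]
    apply mul_nonneg (by positivity)
    rw [hsx, hcx]
    set E := Real.exp (-(x/q - t/q)^2) with hE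
    set e := erf (x/q - t/q) with he
    rw [hsx, hcx] at he0 hE1 hE0
    rw [← hE] at hE1 hE0
    rw [← he] at he0
    have hrew : (1 + e)*(2*(x/q - t/q)*(x/q) + 1) - 2/p*E*(x/q)
        = (1 + e)*(x^2 - t*x + 1) - E*x*q/p := by
      field_simp
      ring_nf
      linear_combination (x*q*E - (1+e)*p*x*(x-t)) * hq2
    rw [hrew]
    clear_value x t r p q E e
    clear hderiv hev hgeq hg₂ h2 hcont hrew hχ₂ hρ hB hsx hcx hu0
    have hq4 : r*x + 1/2 ≤ x^2 - t*x + 1 := by nlinarith [hquad]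
    have hpr' : p*r = (Real.pi/2)*q := by
      rw [← hrq]; linear_combination q * hr2
    have hpr : q ≤ p*r := by rw [hpr']; nlinarith
    have c1 : E*x*q ≤ x*q := by
      nlinarith [mul_nonneg (mul_nonneg (by linarith : (0:ℝ) ≤ 1 - E) hx0.le) hq0.le]
    have c2 : x*q ≤ x*(p*r) := by
      nlinarith [mul_nonneg hx0.le (sub_nonneg.2 hpr)]
    have c3 : x*(p*r) ≤ (r*x + 1/2)*p := by nlinarith [hp0.le]
    have c4 : (r*x + 1/2)*p ≤ (x^2 - t*x + 1)*p := by
      nlinarith [mul_nonneg (sub_nonneg.2 hq4) hp0.le]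
    have c5 : (x^2 - t*x + 1)*p ≤ (1 + e)*(x^2 - t*x + 1)*p := by
      nlinarith [mul_nonneg he0 (mul_nonneg (by nlinarith : (0:ℝ) ≤ x^2 - t*x + 1) hp0.le)]
    have h5 : E*x*q/p ≤ (1 + e)*(x^2 - t*x + 1) := by
      rw [div_le_iff₀ hp0]; linarith
    linarith
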